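/- Let n be divisible by 4 with n ≥ 8, and define J = J_0 ∪ J_1 ∪ J_2 ∪ J_3 ∪ J_4 ⊆ B_n where (with (x;y) denoting the triple (x, y mod n, (x+y) mod n)): J_0 = {(0;0),(0;1),(0;2),(0;3),(0;4)}, J_1 = {(i;3i+2),(i;3i+3),(i;3i+4) : 1 ≤ i ≤ n/4−1}, J_2 = {(n/4; 3n/4+2)}, J_3 = {(i;3i),(i;3i+1),(i;3i+2) : n/4+1 ≤ i ≤ n/2−1}, J_4 = {(i;i−n/2+1),(i;i),(i;i+1) : n/2 ≤ i ≤ n−1}. Then every column of B_n contains exactly 3 elements of J, every symbol appears in exactly 3 elements of J, and every row contains exactly 3 elements of J except row 0 which contains 5 and row n/4 which contains 1. -/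
import Mathlib


open scoped Classical

/-- A latin square of order `n`: each symbol occurs exactly once in each row and column. -/
def IsLatinSquare {n : ℕ} (L : Fin n → Fin n → Fin n) : Prop :=
  (∀ i, Function.Bijective fun j => L i j) ∧ (∀ j, Function.Bijective fun i => L i j)

/-- A `k`-plex of `L`: a set of cells with exactly `k` in each row, `k` in each column,
and each symbol occurring exactly `k` times. -/
def IsPlex {n : ℕ} (L : Fin n → Fin n → Fin n) (k : ℕ) (K : Finset (Fin n × Fin n)) : Prop :=
  (∀ i, (K.filter fun p => p.1 = i).card = k) ∧
  (∀ j, (K.filter fun p => p.2 = j).card = k) ∧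
  (∀ s, (K.filter fun p => L p.1 p.2 = s).card = k)

/-- `L` has a transversal, i.e. a `1`-plex. -/
def HasTransversal {n : ℕ} (L : Fin n → Fin n → Fin n) : Prop :=
  ∃ K, IsPlex L 1 K

/-- The set `J = J₀ ∪ J₁ ∪ J₂ ∪ J₃ ∪ J₄` of cells of `Bₙ`, for `4 ∣ n`. -/
def InJ4 (n : ℕ) (p : Fin n × Fin n) : Prop :=
  ((p.1 : ℕ) = 0 ∧ (p.2 : ℕ) ≤ 4) ∨
  (∃ i, 1 ≤ i ∧ i ≤ n / 4 - 1 ∧ (p.1 : ℕ) = i ∧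
    ((p.2 : ℕ) = (3 * i + 2) % n ∨ (p.2 : ℕ) = (3 * i + 3) % n ∨
      (p.2 : ℕ) = (3 * i + 4) % n)) ∨
  ((p.1 : ℕ) = n / 4 ∧ (p.2 : ℕ) = (3 * (n / 4) + 2) % n) ∨
  (∃ i, n / 4 + 1 ≤ i ∧ i ≤ n / 2 - 1 ∧ (p.1 : ℕ) = i ∧
    ((p.2 : ℕ) = (3 * i) % n ∨ (p.2 : ℕ) = (3 * i + 1) % n ∨
      (p.2 : ℕ) = (3 * i + 2) % n)) ∨
  (∃ i, n / 2 ≤ i ∧ i ≤ n - 1 ∧ (p.1 : ℕ) = i ∧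
    ((p.2 : ℕ) = i - n / 2 + 1 ∨ (p.2 : ℕ) = i ∨ (p.2 : ℕ) = (i + 1) % n))

/-- Mod-free description of membership in `J`. -/
def Q4 (n a b : ℕ) : Prop :=
  (a = 0 ∧ b ≤ 4) ∨
  (1 ≤ a ∧ a ≤ n/4-1 ∧ (b = 3*a+2 ∨ b = 3*a+3 ∨ b = 3*a+4)) ∨
  (a = n/4 ∧ ((3*(n/4)+2 < n ∧ b = 3*(n/4)+2) ∨ (n ≤ 3*(n/4)+2 ∧ b + n = 3*(n/4)+2))) ∨
  (n/4+1 ≤ a ∧ a ≤ n/2-1 ∧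
    ((b = 3*a ∨ b = 3*a+1 ∨ b = 3*a+2) ∨ (b + n = 3*a ∨ b + n = 3*a+1 ∨ b + n = 3*a+2))) ∨
  (n/2 ≤ a ∧ a ≤ n-1 ∧ (b = a - n/2 + 1 ∨ b = a ∨ b = a+1 ∨ (a = n-1 ∧ b = 0)))

lemma modtwo (n m : ℕ) (h : m < 2*n) :
    (m < n ∧ m % n = m) ∨ (n ≤ m ∧ m % n = m - n) := by
  rcases Nat.lt_or_ge m n with h1 | h1
  · exact Or.inl ⟨h1, Nat.mod_eq_of_lt h1⟩
  · refine Or.inr ⟨h1, ?_⟩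
    rw [Nat.mod_eq_sub_mod h1, Nat.mod_eq_of_lt (by omega)]

lemma pair_ext {n : ℕ} {p q : Fin n × Fin n} (h1 : (p.1 : ℕ) = (q.1 : ℕ))
    (h2 : (p.2 : ℕ) = (q.2 : ℕ)) : p = q := by
  obtain ⟨x, y⟩ := p
  obtain ⟨u, v⟩ := q
  simp only [Prod.mk.injEq]
  exact ⟨Fin.ext h1, Fin.ext h2⟩

set_option maxHeartbeats 1000000 in
lemma inJ4_iff (n : ℕ) (h8 : 8 ≤ n) (p : Fin n × Fin n) :
    InJ4 n p ↔ Q4 n (p.1 : ℕ) (p.2 : ℕ) := by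
  obtain ⟨⟨a, ha⟩, ⟨b, hb⟩⟩ := p
  have h0 : 0 < n := by omega
  have hR : InJ4 n (⟨a, ha⟩, ⟨b, hb⟩) ↔
      ((a = 0 ∧ b ≤ 4) ∨
       (1 ≤ a ∧ a ≤ n/4-1 ∧ (b = (3*a+2)%n ∨ b = (3*a+3)%n ∨ b = (3*a+4)%n)) ∨
       (a = n/4 ∧ b = (3*(n/4)+2)%n) ∨
       (n/4+1 ≤ a ∧ a ≤ n/2-1 ∧ (b = (3*a)%n ∨ b = (3*a+1)%n ∨ b = (3*a+2)%n)) ∨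
       (n/2 ≤ a ∧ a ≤ n-1 ∧ (b = a - n/2 + 1 ∨ b = a ∨ b = (a+1)%n))) := by
    unfold InJ4
    constructor
    · rintro (h | ⟨i, h1, h2, h3, h4⟩ | h | ⟨i, h1, h2, h3, h4⟩ | ⟨i, h1, h2, h3, h4⟩)
      · exact Or.inl h
      · subst h3; exact Or.inr (Or.inl ⟨h1, h2, h4⟩)
      · exact Or.inr (Or.inr (Or.inl h))
      · subst h3; exact Or.inr (Or.inr (Or.inr (Or.inl ⟨h1, h2, h4⟩)))
      · subst h3; exact Or.inr (Or.inr (Or.inr (Or.inr ⟨h1, h2, h4⟩)))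
    · rintro (h | ⟨h1, h2, h4⟩ | h | ⟨h1, h2, h4⟩ | ⟨h1, h2, h4⟩)
      · exact Or.inl h
      · exact Or.inr (Or.inl ⟨a, h1, h2, rfl, h4⟩)
      · exact Or.inr (Or.inr (Or.inl h))
      · exact Or.inr (Or.inr (Or.inr (Or.inl ⟨a, h1, h2, rfl, h4⟩)))
      · exact Or.inr (Or.inr (Or.inr (Or.inr ⟨a, h1, h2, rfl, h4⟩)))
  rw [hR]
  show _ ↔ Q4 n a b
  unfold Q4
  constructor
  · rintro (h | ⟨h1, h2, h3⟩ | ⟨h1, h2⟩ | ⟨h1, h2, h3⟩ | ⟨h1, h2, h3⟩)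
    · exact Or.inl h
    · refine Or.inr (Or.inl ⟨h1, h2, ?_⟩)
      rw [Nat.mod_eq_of_lt (show 3*a+2 < n by omega), Nat.mod_eq_of_lt (show 3*a+3 < n by omega),
        Nat.mod_eq_of_lt (show 3*a+4 < n by omega)] at h3
      exact h3
    · refine Or.inr (Or.inr (Or.inl ⟨h1, ?_⟩))
      have m4 := modtwo n (3*(n/4)+2) (by omega)
      omega
    · refine Or.inr (Or.inr (Or.inr (Or.inl ⟨h1, h2, ?_⟩)))
      have m5 := modtwo n (3*a) (by omega)
      have m6 := modtwo n (3*a+1) (by omega)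
      have m1 := modtwo n (3*a+2) (by omega)
      omega
    · refine Or.inr (Or.inr (Or.inr (Or.inr ⟨h1, h2, ?_⟩)))
      have m7 := modtwo n (a+1) (by omega)
      omega
  · rintro (h | ⟨h1, h2, h3⟩ | ⟨h1, h2⟩ | ⟨h1, h2, h3⟩ | ⟨h1, h2, h3⟩)
    · exact Or.inl h
    · refine Or.inr (Or.inl ⟨h1, h2, ?_⟩)
      rw [Nat.mod_eq_of_lt (show 3*a+2 < n by omega), Nat.mod_eq_of_lt (show 3*a+3 < n by omega),
        Nat.mod_eq_of_lt (show 3*a+4 < n by omega)]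
      exact h3
    · refine Or.inr (Or.inr (Or.inl ⟨h1, ?_⟩))
      have m4 := modtwo n (3*(n/4)+2) (by omega)
      omega
    · refine Or.inr (Or.inr (Or.inr (Or.inl ⟨h1, h2, ?_⟩)))
      have m5 := modtwo n (3*a) (by omega)
      have m6 := modtwo n (3*a+1) (by omega)
      have m1 := modtwo n (3*a+2) (by omega)
      omega
    · refine Or.inr (Or.inr (Or.inr (Or.inr ⟨h1, h2, ?_⟩)))
      have m7 := modtwo n (a+1) (by omega)
      omega

/-- Row of the first cell of `J` in column `c`. -/
def colA (n c : ℕ) : ℕ := if c ≤ 4 then 0 else if c ≤ 3*(n/4)+2 then (c-2)/3 else c/3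
/-- Row of the second cell of `J` in column `c`. -/
def colB (n c : ℕ) : ℕ := if c ≤ n/2 - 1 then (c+n)/3 else if c = n/2 then n-1 else c
/-- Row of the third cell of `J` in column `c`. -/
def colC (n c : ℕ) : ℕ :=
  if c = 0 then n-1 else if c ≤ n/2-1 then c + n/2 - 1 else if c = n/2 then n/2 else c - 1

lemma mem_colA (n c : ℕ) (h8 : 8 ≤ n) (h4 : 4 ∣ n) (hc : c < n) : Q4 n (colA n c) c := by
  unfold Q4 colA
  split_ifs with h1 h2
  · exact Or.inl ⟨rfl, by omega⟩
  · rcases Nat.lt_or_ge c (3*(n/4)+2) with h3 | h3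
    · exact Or.inr (Or.inl ⟨by omega, by omega, by omega⟩)
    · exact Or.inr (Or.inr (Or.inl ⟨by omega, Or.inl ⟨by omega, by omega⟩⟩))
  · exact Or.inr (Or.inr (Or.inr (Or.inl ⟨by omega, by omega, Or.inl (by omega)⟩)))

lemma mem_colB (n c : ℕ) (h8 : 8 ≤ n) (h4 : 4 ∣ n) (hc : c < n) : Q4 n (colB n c) c := by
  unfold Q4 colB
  split_ifs with h1 h2
  · rcases Nat.lt_or_ge ((c+n)/3) (n/4+1) with h3 | h3
    · exact Or.inr (Or.inr (Or.inl ⟨by omega, Or.inr ⟨by omega, by omega⟩⟩))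
    · exact Or.inr (Or.inr (Or.inr (Or.inl ⟨h3, by omega, Or.inr (by omega)⟩)))
  · exact Or.inr (Or.inr (Or.inr (Or.inr ⟨by omega, by omega, Or.inl (by omega)⟩)))
  · exact Or.inr (Or.inr (Or.inr (Or.inr ⟨by omega, by omega, Or.inr (Or.inl rfl)⟩)))

lemma mem_colC (n c : ℕ) (h8 : 8 ≤ n) (h4 : 4 ∣ n) (hc : c < n) : Q4 n (colC n c) c := by
  unfold Q4 colC
  split_ifs with h1 h2 h3
  · exact Or.inr (Or.inr (Or.inr (Or.inr ⟨by omega, by omega,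
      Or.inr (Or.inr (Or.inr ⟨by omega, by omega⟩))⟩)))
  · exact Or.inr (Or.inr (Or.inr (Or.inr ⟨by omega, by omega, Or.inl (by omega)⟩)))
  · exact Or.inr (Or.inr (Or.inr (Or.inr ⟨by omega, by omega, Or.inr (Or.inl (by omega))⟩)))
  · exact Or.inr (Or.inr (Or.inr (Or.inr ⟨by omega, by omega, Or.inr (Or.inr (Or.inl (by omega)))⟩)))

set_option maxHeartbeats 1000000 in
lemma col_complete (n a b : ℕ) (h8 : 8 ≤ n) (h4 : 4 ∣ n) (ha : a < n) (hb : b < n)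
    (h : Q4 n a b) : a = colA n b ∨ a = colB n b ∨ a = colC n b := by
  unfold Q4 at h
  unfold colA colB colC
  rcases h with ⟨h1, h2⟩ | ⟨h1, h2, h3⟩ | ⟨h1, h2⟩ | ⟨h1, h2, h3⟩ | ⟨h1, h2, h3⟩ <;>
    split_ifs <;> omega

/-- Row of the first cell of `J` with symbol `s`. -/
def symA (n s : ℕ) : ℕ :=
  if s % 2 = 0 then (if s ≤ 4 then 0 else (s-2)/4)
  else (if s ≤ 3 then 0 else if s % 4 = 3 then (s-2)/4 else (s+n)/4)
/-- Row of the second cell of `J` with symbol `s`. -/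
def symB (n s : ℕ) : ℕ :=
  if s % 2 = 0 then (if s = 0 then n/4-1 else (s+n)/4) else (s+n-1)/2
/-- Row of the third cell of `J` with symbol `s`. -/
def symC (n s : ℕ) : ℕ :=
  if s % 2 = 0 then (s+n)/2
  else (if n/2+1 ≤ s then (s + n/2 - 1)/2 else (s + 3*(n/2) - 1)/2)
/-- Column of the cell in row `r` with symbol `s`. -/
def colOf (n s r : ℕ) : ℕ := if r ≤ s then s - r else s + n - r

lemma colOf_mod (n s r : ℕ) (hs : s < n) (hr : r < n) : (r + colOf n s r) % n = s := by
  unfold colOf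
  split_ifs with h
  · have e : r + (s - r) = s := by omega
    rw [e, Nat.mod_eq_of_lt hs]
  · have e : r + (s + n - r) = s + n := by omega
    rw [e, Nat.add_mod_right, Nat.mod_eq_of_lt hs]

lemma col_determined (n s a b : ℕ) (hs : s < n) (ha : a < n) (hb : b < n)
    (h : (a + b) % n = s) : b = colOf n s a := by
  have m := modtwo n (a + b) (by omega)
  unfold colOf
  split_ifs with hh <;> omega

lemma mem_symA (n s : ℕ) (h8 : 8 ≤ n) (h4 : 4 ∣ n) (hs : s < n) :
    Q4 n (symA n s) (colOf n s (symA n s)) := by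
  unfold Q4 symA colOf
  split_ifs with h1 h2 h3 h4' h5 <;>
  first
  | exact Or.inl ⟨rfl, by omega⟩
  | exact Or.inr (Or.inl ⟨by omega, by omega, by omega⟩)
  | exact Or.inr (Or.inr (Or.inr (Or.inl ⟨by omega, by omega, by omega⟩)))

lemma mem_symB (n s : ℕ) (h8 : 8 ≤ n) (h4 : 4 ∣ n) (hs : s < n) :
    Q4 n (symB n s) (colOf n s (symB n s)) := by
  unfold Q4 symB colOf
  split_ifs with h1 h2 h3
  · -- s even, s = 0 : row n/4-1, J1
    exact Or.inr (Or.inl ⟨by omega, by omega, by omega⟩)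
  · exact Or.inr (Or.inl ⟨by omega, by omega, by omega⟩)
  · -- s even, s ≥ 2 : row (s+n)/4, J2 or J3
    rcases Nat.lt_or_ge ((s+n)/4) (n/4+1) with h5 | h5
    · exact Or.inr (Or.inr (Or.inl ⟨by omega, by omega⟩))
    · exact Or.inr (Or.inr (Or.inr (Or.inl ⟨h5, by omega, by omega⟩)))
  · rcases Nat.lt_or_ge ((s+n)/4) (n/4+1) with h5 | h5
    · exact Or.inr (Or.inr (Or.inl ⟨by omega, by omega⟩))
    · exact Or.inr (Or.inr (Or.inr (Or.inl ⟨h5, by omega, by omega⟩)))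
  · -- s odd : row (s+n-1)/2, J4
    exact Or.inr (Or.inr (Or.inr (Or.inr ⟨by omega, by omega, by omega⟩)))
  · exact Or.inr (Or.inr (Or.inr (Or.inr ⟨by omega, by omega, by omega⟩)))

lemma mem_symC (n s : ℕ) (h8 : 8 ≤ n) (h4 : 4 ∣ n) (hs : s < n) :
    Q4 n (symC n s) (colOf n s (symC n s)) := by
  unfold Q4 symC colOf
  split_ifs <;>
    exact Or.inr (Or.inr (Or.inr (Or.inr ⟨by omega, by omega, by omega⟩)))

set_option maxHeartbeats 1000000 in
lemma sym_complete (n a b s : ℕ) (h8 : 8 ≤ n) (h4 : 4 ∣ n) (ha : a < n) (hb : b < n)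
    (hs : s < n) (h : Q4 n a b) (hm : (a + b) % n = s) :
    a = symA n s ∨ a = symB n s ∨ a = symC n s := by
  have m := modtwo n (a + b) (by omega)
  unfold Q4 at h
  rcases h with ⟨h1, h2⟩ | ⟨h1, h2, h3⟩ | ⟨h1, h2⟩ | ⟨h1, h2, h3⟩ | ⟨h1, h2, h3⟩
  · left; unfold symA; split_ifs <;> omega
  · rcases h3 with hb3 | hb3 | hb3
    · left; unfold symA; split_ifs <;> omega
    · left; unfold symA; split_ifs <;> omega
    · rcases m with ⟨hlt, hm'⟩ | ⟨hge, hm'⟩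
      · left; unfold symA; split_ifs <;> omega
      · right; left; unfold symB; split_ifs <;> omega
  · right; left; unfold symB; split_ifs <;> omega
  · rcases h3 with (hb3 | hb3 | hb3) | (hb3 | hb3 | hb3)
    · right; left; unfold symB; split_ifs <;> omega
    · left; unfold symA; split_ifs <;> omega
    · right; left; unfold symB; split_ifs <;> omega
    · right; left; unfold symB; split_ifs <;> omega
    · left; unfold symA; split_ifs <;> omega
    · right; left; unfold symB; split_ifs <;> omega
  · rcases h3 with hb3 | hb3 | hb3 | ⟨ha3, hb3⟩
    · right; right; unfold symC; split_ifs <;> omega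
    · right; right; unfold symC; split_ifs <;> omega
    · right; left; unfold symB; split_ifs <;> omega
    · right; left; unfold symB; split_ifs <;> omega

/-- Columns of the three cells of `J` in a generic row `r`. -/
def rowC1 (n r : ℕ) : ℕ :=
  if r ≤ n/4-1 then 3*r+2
  else if r ≤ n/2-1 then (if 3*r < n then 3*r else 3*r-n) else r - n/2 + 1
def rowC2 (n r : ℕ) : ℕ :=
  if r ≤ n/4-1 then 3*r+3
  else if r ≤ n/2-1 then (if 3*r+1 < n then 3*r+1 else 3*r+1-n) else r
def rowC3 (n r : ℕ) : ℕ :=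
  if r ≤ n/4-1 then 3*r+4
  else if r ≤ n/2-1 then (if 3*r+2 < n then 3*r+2 else 3*r+2-n)
  else (if r+1 < n then r+1 else 0)

lemma mem_rowC1 (n r : ℕ) (h8 : 8 ≤ n) (h4 : 4 ∣ n) (hr : r < n) (hr0 : r ≠ 0)
    (hr4 : r ≠ n/4) : Q4 n r (rowC1 n r) := by
  unfold Q4 rowC1
  split_ifs with h1 h2 h3
  · exact Or.inr (Or.inl ⟨by omega, h1, Or.inl rfl⟩)
  · exact Or.inr (Or.inr (Or.inr (Or.inl ⟨by omega, h2, Or.inl (Or.inl rfl)⟩)))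
  · exact Or.inr (Or.inr (Or.inr (Or.inl ⟨by omega, h2, Or.inr (Or.inl (by omega))⟩)))
  · exact Or.inr (Or.inr (Or.inr (Or.inr ⟨by omega, by omega, Or.inl rfl⟩)))

lemma mem_rowC2 (n r : ℕ) (h8 : 8 ≤ n) (h4 : 4 ∣ n) (hr : r < n) (hr0 : r ≠ 0)
    (hr4 : r ≠ n/4) : Q4 n r (rowC2 n r) := by
  unfold Q4 rowC2
  split_ifs with h1 h2 h3
  · exact Or.inr (Or.inl ⟨by omega, h1, Or.inr (Or.inl rfl)⟩)
  · exact Or.inr (Or.inr (Or.inr (Or.inl ⟨by omega, h2, Or.inl (Or.inr (Or.inl rfl))⟩)))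
  · exact Or.inr (Or.inr (Or.inr (Or.inl ⟨by omega, h2, Or.inr (Or.inr (Or.inl (by omega)))⟩)))
  · exact Or.inr (Or.inr (Or.inr (Or.inr ⟨by omega, by omega, Or.inr (Or.inl rfl)⟩)))

lemma mem_rowC3 (n r : ℕ) (h8 : 8 ≤ n) (h4 : 4 ∣ n) (hr : r < n) (hr0 : r ≠ 0)
    (hr4 : r ≠ n/4) : Q4 n r (rowC3 n r) := by
  unfold Q4 rowC3
  split_ifs with h1 h2 h3 h5
  · exact Or.inr (Or.inl ⟨by omega, h1, Or.inr (Or.inr rfl)⟩)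
  · exact Or.inr (Or.inr (Or.inr (Or.inl ⟨by omega, h2, Or.inl (Or.inr (Or.inr rfl))⟩)))
  · exact Or.inr (Or.inr (Or.inr (Or.inl ⟨by omega, h2, Or.inr (Or.inr (Or.inr (by omega)))⟩)))
  · exact Or.inr (Or.inr (Or.inr (Or.inr ⟨by omega, by omega, Or.inr (Or.inr (Or.inl rfl))⟩)))
  · exact Or.inr (Or.inr (Or.inr (Or.inr ⟨by omega, by omega,
      Or.inr (Or.inr (Or.inr ⟨by omega, by omega⟩))⟩)))

lemma row_complete (n a b : ℕ) (h8 : 8 ≤ n) (h4 : 4 ∣ n) (ha : a < n) (hb : b < n)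
    (hr0 : a ≠ 0) (hr4 : a ≠ n/4) (h : Q4 n a b) :
    b = rowC1 n a ∨ b = rowC2 n a ∨ b = rowC3 n a := by
  unfold Q4 at h
  unfold rowC1 rowC2 rowC3
  rcases h with ⟨h1, h2⟩ | ⟨h1, h2, h3⟩ | ⟨h1, h2⟩ | ⟨h1, h2, h3⟩ | ⟨h1, h2, h3⟩ <;>
    split_ifs <;> omega

lemma row0_complete (n a b : ℕ) (h8 : 8 ≤ n) (h4 : 4 ∣ n) (ha : a < n) (hb : b < n)
    (hr0 : a = 0) (h : Q4 n a b) : b ≤ 4 := by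
  unfold Q4 at h
  rcases h with ⟨h1, h2⟩ | ⟨h1, h2, h3⟩ | ⟨h1, h2⟩ | ⟨h1, h2, h3⟩ | ⟨h1, h2, h3⟩ <;> omega

lemma rowN4_complete (n a b : ℕ) (h8 : 8 ≤ n) (h4 : 4 ∣ n) (ha : a < n) (hb : b < n)
    (hr4 : a = n/4) (h : Q4 n a b) :
    b = (if 3*(n/4)+2 < n then 3*(n/4)+2 else 3*(n/4)+2 - n) := by
  unfold Q4 at h
  rcases h with ⟨h1, h2⟩ | ⟨h1, h2, h3⟩ | ⟨h1, h2⟩ | ⟨h1, h2, h3⟩ | ⟨h1, h2, h3⟩ <;>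
    split_ifs <;> omega

lemma mem_rowN4 (n : ℕ) (h8 : 8 ≤ n) (h4 : 4 ∣ n) :
    Q4 n (n/4) (if 3*(n/4)+2 < n then 3*(n/4)+2 else 3*(n/4)+2 - n) := by
  unfold Q4
  split_ifs with h1
  · exact Or.inr (Or.inr (Or.inl ⟨rfl, Or.inl ⟨h1, rfl⟩⟩))
  · exact Or.inr (Or.inr (Or.inl ⟨rfl, Or.inr ⟨by omega, by omega⟩⟩))

theorem stmt15 (n : ℕ) (h4 : 4 ∣ n) (h8 : 8 ≤ n) :
    (∀ c : Fin n,
      ((Finset.univ.filter (InJ4 n)).filter fun p => p.2 = c).card = 3) ∧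
    (∀ s : Fin n,
      ((Finset.univ.filter (InJ4 n)).filter
        fun p => ((p.1 : ℕ) + (p.2 : ℕ)) % n = (s : ℕ)).card = 3) ∧
    (∀ i : Fin n, (i : ℕ) = 0 →
      ((Finset.univ.filter (InJ4 n)).filter fun p => p.1 = i).card = 5) ∧
    (∀ i : Fin n, (i : ℕ) = n / 4 →
      ((Finset.univ.filter (InJ4 n)).filter fun p => p.1 = i).card = 1) ∧
    (∀ i : Fin n, (i : ℕ) ≠ 0 → (i : ℕ) ≠ n / 4 →
      ((Finset.univ.filter (InJ4 n)).filter fun p => p.1 = i).card = 3) := by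
  have h0 : 0 < n := by omega
  refine ⟨?_, ?_, ?_, ?_, ?_⟩
  · -- columns
    intro c
    have hc := c.isLt
    have hA : colA n (c : ℕ) < n := by unfold colA; split_ifs <;> omega
    have hB : colB n (c : ℕ) < n := by unfold colB; split_ifs <;> omega
    have hC : colC n (c : ℕ) < n := by unfold colC; split_ifs <;> omega
    have key : ((Finset.univ.filter (InJ4 n)).filter fun p => p.2 = c) =
        {(⟨colA n (c : ℕ), hA⟩, c), (⟨colB n (c : ℕ), hB⟩, c), (⟨colC n (c : ℕ), hC⟩, c)} := by
      ext p
      simp only [Finset.mem_filter, Finset.mem_univ, true_and, Finset.mem_insert,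
        Finset.mem_singleton, inJ4_iff n h8]
      constructor
      · rintro ⟨hQ, h2⟩
        rw [h2] at hQ
        rcases col_complete n (p.1 : ℕ) (c : ℕ) h8 h4 p.1.isLt c.isLt hQ with h | h | h
        · exact Or.inl (pair_ext h (congrArg Fin.val h2))
        · exact Or.inr (Or.inl (pair_ext h (congrArg Fin.val h2)))
        · exact Or.inr (Or.inr (pair_ext h (congrArg Fin.val h2)))
      · rintro (rfl | rfl | rfl)
        · exact ⟨mem_colA n (c : ℕ) h8 h4 hc, rfl⟩
        · exact ⟨mem_colB n (c : ℕ) h8 h4 hc, rfl⟩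
        · exact ⟨mem_colC n (c : ℕ) h8 h4 hc, rfl⟩
    rw [key]
    have d1 : colA n (c : ℕ) ≠ colB n (c : ℕ) := by
      unfold colA colB; split_ifs <;> omega
    have d2 : colA n (c : ℕ) ≠ colC n (c : ℕ) := by
      unfold colA colC; split_ifs <;> omega
    have d3 : colB n (c : ℕ) ≠ colC n (c : ℕ) := by
      unfold colB colC; split_ifs <;> omega
    rw [Finset.card_insert_of_notMem (by simp [Prod.ext_iff, Fin.ext_iff, d1, d2]),
      Finset.card_insert_of_notMem (by simp [Prod.ext_iff, Fin.ext_iff, d3]),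
      Finset.card_singleton]
  · -- symbols
    intro s
    have hs := s.isLt
    have hA : symA n (s : ℕ) < n := by unfold symA; split_ifs <;> omega
    have hB : symB n (s : ℕ) < n := by unfold symB; split_ifs <;> omega
    have hC : symC n (s : ℕ) < n := by unfold symC; split_ifs <;> omega
    have hCA : colOf n (s : ℕ) (symA n (s : ℕ)) < n := by unfold colOf; split_ifs <;> omega
    have hCB : colOf n (s : ℕ) (symB n (s : ℕ)) < n := by unfold colOf; split_ifs <;> omega
    have hCC : colOf n (s : ℕ) (symC n (s : ℕ)) < n := by unfold colOf; split_ifs <;> omega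
    have key : ((Finset.univ.filter (InJ4 n)).filter
          fun p => ((p.1 : ℕ) + (p.2 : ℕ)) % n = (s : ℕ)) =
        {(⟨symA n (s : ℕ), hA⟩, ⟨colOf n (s : ℕ) (symA n (s : ℕ)), hCA⟩),
         (⟨symB n (s : ℕ), hB⟩, ⟨colOf n (s : ℕ) (symB n (s : ℕ)), hCB⟩),
         (⟨symC n (s : ℕ), hC⟩, ⟨colOf n (s : ℕ) (symC n (s : ℕ)), hCC⟩)} := by
      ext p
      simp only [Finset.mem_filter, Finset.mem_univ, true_and, Finset.mem_insert,
        Finset.mem_singleton, inJ4_iff n h8]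
      constructor
      · rintro ⟨hQ, hm⟩
        have hb := col_determined n (s : ℕ) (p.1 : ℕ) (p.2 : ℕ) hs p.1.isLt p.2.isLt hm
        rcases sym_complete n (p.1 : ℕ) (p.2 : ℕ) (s : ℕ) h8 h4 p.1.isLt p.2.isLt hs hQ hm
          with h | h | h
        · exact Or.inl (pair_ext h (by rw [hb, h]))
        · exact Or.inr (Or.inl (pair_ext h (by rw [hb, h])))
        · exact Or.inr (Or.inr (pair_ext h (by rw [hb, h])))
      · rintro (rfl | rfl | rfl)
        · exact ⟨mem_symA n (s : ℕ) h8 h4 hs, colOf_mod n (s : ℕ) _ hs hA⟩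
        · exact ⟨mem_symB n (s : ℕ) h8 h4 hs, colOf_mod n (s : ℕ) _ hs hB⟩
        · exact ⟨mem_symC n (s : ℕ) h8 h4 hs, colOf_mod n (s : ℕ) _ hs hC⟩
    rw [key]
    have d1 : symA n (s : ℕ) ≠ symB n (s : ℕ) := by
      unfold symA symB; split_ifs <;> omega
    have d2 : symA n (s : ℕ) ≠ symC n (s : ℕ) := by
      unfold symA symC; split_ifs <;> omega
    have d3 : symB n (s : ℕ) ≠ symC n (s : ℕ) := by
      unfold symB symC; split_ifs <;> omega
    rw [Finset.card_insert_of_notMem (by simp [Prod.ext_iff, Fin.ext_iff, d1, d2]),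
      Finset.card_insert_of_notMem (by simp [Prod.ext_iff, Fin.ext_iff, d3]),
      Finset.card_singleton]
  · -- row 0
    intro i hi
    have key : ((Finset.univ.filter (InJ4 n)).filter fun p => p.1 = i) =
        {(i, ⟨0, by omega⟩), (i, ⟨1, by omega⟩), (i, ⟨2, by omega⟩),
         (i, ⟨3, by omega⟩), (i, ⟨4, by omega⟩)} := by
      ext p
      simp only [Finset.mem_filter, Finset.mem_univ, true_and, Finset.mem_insert,
        Finset.mem_singleton, inJ4_iff n h8]
      constructor
      · rintro ⟨hQ, h2⟩
        have ha0 : (p.1 : ℕ) = 0 := by rw [h2, hi]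
        have hb := row0_complete n (p.1 : ℕ) (p.2 : ℕ) h8 h4 p.1.isLt p.2.isLt ha0 hQ
        have h5 : (p.2 : ℕ) = 0 ∨ (p.2 : ℕ) = 1 ∨ (p.2 : ℕ) = 2 ∨ (p.2 : ℕ) = 3 ∨
            (p.2 : ℕ) = 4 := by omega
        have h1v := congrArg Fin.val h2
        rcases h5 with h | h | h | h | h
        · exact Or.inl (pair_ext h1v h)
        · exact Or.inr (Or.inl (pair_ext h1v h))
        · exact Or.inr (Or.inr (Or.inl (pair_ext h1v h)))
        · exact Or.inr (Or.inr (Or.inr (Or.inl (pair_ext h1v h))))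
        · exact Or.inr (Or.inr (Or.inr (Or.inr (pair_ext h1v h))))
      · rintro (rfl | rfl | rfl | rfl | rfl)
        · refine ⟨Or.inl ⟨hi, ?_⟩, rfl⟩; show (0:ℕ) ≤ 4; omega
        · refine ⟨Or.inl ⟨hi, ?_⟩, rfl⟩; show (1:ℕ) ≤ 4; omega
        · refine ⟨Or.inl ⟨hi, ?_⟩, rfl⟩; show (2:ℕ) ≤ 4; omega
        · refine ⟨Or.inl ⟨hi, ?_⟩, rfl⟩; show (3:ℕ) ≤ 4; omega
        · refine ⟨Or.inl ⟨hi, ?_⟩, rfl⟩; show (4:ℕ) ≤ 4; omega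
    rw [key]
    rw [Finset.card_insert_of_notMem (by simp [Prod.ext_iff, Fin.ext_iff]),
      Finset.card_insert_of_notMem (by simp [Prod.ext_iff, Fin.ext_iff]),
      Finset.card_insert_of_notMem (by simp [Prod.ext_iff, Fin.ext_iff]),
      Finset.card_insert_of_notMem (by simp [Prod.ext_iff, Fin.ext_iff]),
      Finset.card_singleton]
  · -- row n/4
    intro i hi
    have hbv : (if 3*(n/4)+2 < n then 3*(n/4)+2 else 3*(n/4)+2 - n) < n := by
      split_ifs <;> omega
    have key : ((Finset.univ.filter (InJ4 n)).filter fun p => p.1 = i) =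
        {(i, ⟨if 3*(n/4)+2 < n then 3*(n/4)+2 else 3*(n/4)+2 - n, hbv⟩)} := by
      ext p
      simp only [Finset.mem_filter, Finset.mem_univ, true_and,
        Finset.mem_singleton, inJ4_iff n h8]
      constructor
      · rintro ⟨hQ, h2⟩
        have ha4 : (p.1 : ℕ) = n/4 := by rw [h2, hi]
        have hb := rowN4_complete n (p.1 : ℕ) (p.2 : ℕ) h8 h4 p.1.isLt p.2.isLt ha4 hQ
        exact pair_ext (congrArg Fin.val h2) hb
      · rintro rfl
        refine ⟨?_, rfl⟩
        show Q4 n (i : ℕ) _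
        rw [hi]
        exact mem_rowN4 n h8 h4
    rw [key, Finset.card_singleton]
  · -- generic rows
    intro i hi0 hi4
    have hr := i.isLt
    have h1 : rowC1 n (i : ℕ) < n := by unfold rowC1; split_ifs <;> omega
    have h2 : rowC2 n (i : ℕ) < n := by unfold rowC2; split_ifs <;> omega
    have h3 : rowC3 n (i : ℕ) < n := by unfold rowC3; split_ifs <;> omega
    have key : ((Finset.univ.filter (InJ4 n)).filter fun p => p.1 = i) =
        {(i, ⟨rowC1 n (i : ℕ), h1⟩), (i, ⟨rowC2 n (i : ℕ), h2⟩),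
         (i, ⟨rowC3 n (i : ℕ), h3⟩)} := by
      ext p
      simp only [Finset.mem_filter, Finset.mem_univ, true_and, Finset.mem_insert,
        Finset.mem_singleton, inJ4_iff n h8]
      constructor
      · rintro ⟨hQ, hp⟩
        have ha : (p.1 : ℕ) = (i : ℕ) := congrArg Fin.val hp
        rw [ha] at hQ
        rcases row_complete n (i : ℕ) (p.2 : ℕ) h8 h4 hr p.2.isLt hi0 hi4 hQ with h | h | h
        · exact Or.inl (pair_ext ha h)
        · exact Or.inr (Or.inl (pair_ext ha h))
        · exact Or.inr (Or.inr (pair_ext ha h))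
      · rintro (rfl | rfl | rfl)
        · exact ⟨mem_rowC1 n (i : ℕ) h8 h4 hr hi0 hi4, rfl⟩
        · exact ⟨mem_rowC2 n (i : ℕ) h8 h4 hr hi0 hi4, rfl⟩
        · exact ⟨mem_rowC3 n (i : ℕ) h8 h4 hr hi0 hi4, rfl⟩
    rw [key]
    have d1 : rowC1 n (i : ℕ) ≠ rowC2 n (i : ℕ) := by
      unfold rowC1 rowC2; split_ifs <;> omega
    have d2 : rowC1 n (i : ℕ) ≠ rowC3 n (i : ℕ) := by
      unfold rowC1 rowC3; split_ifs <;> omega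
    have d3 : rowC2 n (i : ℕ) ≠ rowC3 n (i : ℕ) := by
      unfold rowC2 rowC3; split_ifs <;> omega
    rw [Finset.card_insert_of_notMem (by simp [Prod.ext_iff, Fin.ext_iff, d1, d2]),
      Finset.card_insert_of_notMem (by simp [Prod.ext_iff, Fin.ext_iff, d3]),
      Finset.card_singleton]
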